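/- Let 𝔟 and 𝔟̃ be the Dirichlet-to-Neumann forms associated with closed boundary sets Γ_0 ⊆ Γ̃_0. Then D(𝔟̃) is an ideal of D(𝔟): whenever 0 ≤ φ ≤ ψ with φ ∈ D(𝔟) and ψ ∈ D(𝔟̃), one has φ ∈ D(𝔟̃). Consequently (by the domination criterion for forms) 0 ≤ T_t^{Γ̃_1} φ ≤ T_t^{Γ_1} φ for all 0 ≤ φ ∈ L²(∂Ω) and t ≥ 0. -/
import Mathlib


/- STATEMENT 11: Let `𝔟` and `𝔟̃` be the Dirichlet-to-Neumann forms associated with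
closed boundary sets `Γ₀ ⊆ Γ̃₀`. Then `D(𝔟̃)` is an ideal of `D(𝔟)`: whenever
`0 ≤ φ ≤ ψ` with `φ ∈ D(𝔟)` and `ψ ∈ D(𝔟̃)`, one has `φ ∈ D(𝔟̃)`. (By the
domination criterion for positive semigroups this yields
`0 ≤ T_t^{Γ̃₁} φ ≤ T_t^{Γ₁} φ` for all `0 ≤ φ ∈ L²(∂Ω)`, `t ≥ 0`.)

Formalization: `(B, σ)` is the boundary measure space, `W` plays the role of
`W^{1,2}(Ω)` with trace map `Tr : W → L²(B,σ)`; `D(𝔟) = Tr(V)` where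
`V = {u : Tr u = 0 σ-a.e. on Γ₀}`, and `D(𝔟̃) = Tr(Ṽ)` with `Γ̃₀` in place of `Γ₀`. -/

open MeasureTheory

theorem DtN_form_domain_is_ideal
    {B : Type*} [MeasurableSpace B] (σ : Measure B)
    (Γ₀ Γ₀t : Set B) (hsub : Γ₀ ⊆ Γ₀t)
    {W : Type*} [AddCommGroup W] [Module ℝ W]
    (Tr : W →ₗ[ℝ] Lp ℝ 2 σ)
    (φ ψ : Lp ℝ 2 σ)
    -- `φ ∈ D(𝔟) = Tr(V)`:
    (hφ : ∃ u : W, (∀ᵐ x ∂σ, x ∈ Γ₀ → (Tr u : B → ℝ) x = 0) ∧ Tr u = φ)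
    -- `ψ ∈ D(𝔟̃) = Tr(Ṽ)`:
    (hψ : ∃ v : W, (∀ᵐ x ∂σ, x ∈ Γ₀t → (Tr v : B → ℝ) x = 0) ∧ Tr v = ψ)
    -- `0 ≤ φ ≤ ψ`:
    (horder : ∀ᵐ x ∂σ, 0 ≤ (φ : B → ℝ) x ∧ (φ : B → ℝ) x ≤ (ψ : B → ℝ) x) :
    ∃ u : W, (∀ᵐ x ∂σ, x ∈ Γ₀t → (Tr u : B → ℝ) x = 0) ∧ Tr u = φ := by
  obtain ⟨u, -, hu⟩ := hφ
  obtain ⟨v, hv0, hv⟩ := hψ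
  refine ⟨u, ?_, hu⟩
  have huφ : (Tr u : B → ℝ) =ᵐ[σ] (φ : B → ℝ) := hu ▸ Filter.EventuallyEq.rfl
  have hvψ : (Tr v : B → ℝ) =ᵐ[σ] (ψ : B → ℝ) := hv ▸ Filter.EventuallyEq.rfl
  filter_upwards [huφ, hvψ, hv0, horder] with x h1 h2 h3 h4 hx
  have := h3 hx
  rw [h1]
  rw [this] at h2
  linarith [h4.1, h4.2, h2.symm ▸ h4.2]
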